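/- Let $\{r_n\} \subset (0,1)$ be a sequence decreasing monotonically to zero, and let $a > 0$ satisfy $r_n/r_{n+1} - 1 = a r_n + o(r_n)$. If $p \ge 1$ and $1/a > p - 1$, then $\lim_{T\to\infty} \frac{\sum_{n=1}^{T} r_n^p \prod_{s=n+1}^{T}(1-r_s)}{r_T^{p-1}} = \frac{1}{1 - a(p-1)}$. -/

import Mathlib

open Filter Asymptotics


-- comparison lemma for divergent sums
lemma sumAux (f g : ℕ → ℝ) (h : ∀ᶠ n in atTop, f n ≤ g n)
    (hf : Tendsto (fun n => ∑ i ∈ Finset.range n, f i) atTop atTop) :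
    Tendsto (fun n => ∑ i ∈ Finset.range n, g i) atTop atTop := by
  obtain ⟨N, hN⟩ := eventually_atTop.mp h
  have key : ∀ᶠ n in atTop,
      (∑ i ∈ Finset.range n, f i) + (∑ i ∈ Finset.range N, (g i - f i)) ≤
        ∑ i ∈ Finset.range n, g i := by
    filter_upwards [eventually_ge_atTop N] with n hn
    have h1 : ∑ i ∈ Finset.range N, (g i - f i) ≤ ∑ i ∈ Finset.range n, (g i - f i) := by
      apply Finset.sum_le_sum_of_subset_of_nonneg
      · exact Finset.range_subset_range.mpr hn
      · intro i hi hni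
        have : N ≤ i := by
          simp only [Finset.mem_range] at hni hi
          omega
        linarith [hN i this]
    have h2 : ∑ i ∈ Finset.range n, (g i - f i)
        = (∑ i ∈ Finset.range n, g i) - ∑ i ∈ Finset.range n, f i := by
      rw [Finset.sum_sub_distrib]
    linarith
  exact tendsto_atTop_mono' atTop key
    (tendsto_atTop_add_const_right atTop _ hf)

-- main recursion convergence lemma
lemma tendstoAux (x α d : ℕ → ℝ) (L : ℝ)
    (hx : ∀ n, x (n + 1) = (1 - α n) * x n + d n)
    (hα : ∀ᶠ n in atTop, 0 < α n ∧ α n ≤ 1)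
    (hd : Tendsto (fun n => d n / α n) atTop (nhds L))
    (hsum : Tendsto (fun n => ∑ i ∈ Finset.range n, α i) atTop atTop) :
    Tendsto x atTop (nhds L) := by
  rw [Metric.tendsto_nhds]
  intro ε hε
  have hd' : ∀ᶠ n in atTop, |d n / α n - L| < ε / 4 := by
    have := Metric.tendsto_nhds.mp hd (ε / 4) (by linarith)
    simpa [Real.dist_eq] using this
  obtain ⟨N, hN⟩ := eventually_atTop.mp (hα.and hd')
  set B := |x N - L| with hB
  set P : ℕ → ℝ := fun n => ∏ i ∈ Finset.Ico N n, (1 - α i) with hP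
  have claim : ∀ n, N ≤ n → |x n - L| - ε / 2 ≤ B * P n := by
    intro n hn
    induction n, hn using Nat.le_induction with
    | base =>
      simp only [hP, Finset.Ico_self, Finset.prod_empty, mul_one]
      simp only [hB]; linarith
    | succ n hn ih =>
      obtain ⟨⟨hα0, hα1⟩, hdn⟩ := hN n hn
      have hPn : 0 ≤ P n := by
        apply Finset.prod_nonneg
        intro i hi
        have := (hN i (Finset.mem_Ico.mp hi).1).1.2
        linarith
      have hdαL : |d n - α n * L| ≤ ε / 4 * α n := by
        have : d n - α n * L = α n * (d n / α n - L) := by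
          field_simp
        rw [this, abs_mul, abs_of_pos hα0, mul_comm]
        exact mul_le_mul_of_nonneg_right hdn.le hα0.le
      have hstep : |x (n + 1) - L| ≤ (1 - α n) * |x n - L| + ε / 4 * α n := by
        have hxx : x (n + 1) - L = (1 - α n) * (x n - L) + (d n - α n * L) := by
          rw [hx n]; ring
        calc |x (n + 1) - L| ≤ |(1 - α n) * (x n - L)| + |d n - α n * L| := by
              rw [hxx]; exact abs_add_le _ _
          _ ≤ (1 - α n) * |x n - L| + ε / 4 * α n := by
              rw [abs_mul, abs_of_nonneg (by linarith : (0:ℝ) ≤ 1 - α n)]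
              linarith
      have hPs : P (n + 1) = P n * (1 - α n) := by
        simp only [hP]
        rw [Finset.prod_Ico_succ_top hn]
      have hBP : (1 - α n) * (|x n - L| - ε / 2) ≤ (1 - α n) * (B * P n) :=
        mul_le_mul_of_nonneg_left ih (by linarith)
      rw [hPs]
      nlinarith [abs_nonneg (x n - L)]
  have hBnn : 0 ≤ B := abs_nonneg _
  have hPlim : Tendsto (fun n => B * P n) atTop (nhds 0) := by
    have hPle : ∀ᶠ n in atTop, P n ≤ Real.exp (-(∑ i ∈ Finset.range n, α i
        - ∑ i ∈ Finset.range N, α i)) := by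
      filter_upwards [eventually_ge_atTop N] with n hn
      have : -(∑ i ∈ Finset.range n, α i - ∑ i ∈ Finset.range N, α i)
          = ∑ i ∈ Finset.Ico N n, (-(α i)) := by
        rw [Finset.sum_neg_distrib, Finset.sum_Ico_eq_sub _ hn]
      rw [this, Real.exp_sum]
      apply Finset.prod_le_prod
      · intro i hi
        have := (hN i (Finset.mem_Ico.mp hi).1).1.2
        linarith
      · intro i hi
        linarith [Real.add_one_le_exp (-(α i))]
    have hPnn : ∀ᶠ n in atTop, 0 ≤ P n := by
      filter_upwards [eventually_ge_atTop N] with n hn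
      apply Finset.prod_nonneg
      intro i hi
      have := (hN i (Finset.mem_Ico.mp hi).1).1.2
      linarith
    have hexp : Tendsto (fun n => Real.exp (-(∑ i ∈ Finset.range n, α i
        - ∑ i ∈ Finset.range N, α i))) atTop (nhds 0) := by
      apply Real.tendsto_exp_atBot.comp
      apply tendsto_neg_atBot_iff.mpr
      exact tendsto_atTop_add_const_right atTop _ hsum
    have hP0 : Tendsto P atTop (nhds 0) :=
      squeeze_zero' hPnn hPle hexp
    simpa using hP0.const_mul B
  have hfin : ∀ᶠ n in atTop, B * P n < ε / 2 := by
    have := Metric.tendsto_nhds.mp hPlim (ε / 2) (by linarith)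
    filter_upwards [this] with n hn
    rw [Real.dist_eq, sub_zero] at hn
    calc B * P n ≤ |B * P n| := le_abs_self _
      _ < ε / 2 := hn
  filter_upwards [hfin, eventually_ge_atTop N] with n h1 h2
  rw [Real.dist_eq]
  have := claim n h2
  calc |x n - L| ≤ B * P n + ε / 2 := by linarith
    _ < ε := by linarith


/-- Lemma 2 of the paper: if `r n ∈ (0,1)` decreases monotonically to zero,
`a > 0`, and `r n / r (n+1) - 1 = a r n + o(r n)`, then for `p ≥ 1` with
`1/a > p - 1`, `(∑_{n=1}^{T} r_n^p ∏_{s=n+1}^{T} (1 - r_s)) / r_T^{p-1} → 1/(1 - a(p-1))`. -/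
theorem stmt1 (r : ℕ → ℝ)
    (hpos : ∀ n, 0 < r n) (hlt1 : ∀ n, r n < 1)
    (hmono : ∀ n, r (n + 1) ≤ r n)
    (hlim : Tendsto r atTop (nhds 0))
    (a : ℝ) (ha : 0 < a)
    (hrel : (fun n => r n / r (n + 1) - 1 - a * r n) =o[atTop] r)
    (p : ℝ) (hp : 1 ≤ p) (hpa : p - 1 < 1 / a) :
    Tendsto
      (fun T => (∑ n ∈ Finset.Icc 1 T,
          (r n) ^ p * ∏ s ∈ Finset.Icc (n + 1) T, (1 - r s)) / (r T) ^ (p - 1))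
      atTop (nhds (1 / (1 - a * (p - 1)))) := by
  have hrne : ∀ n, r n ≠ 0 := fun n => (hpos n).ne'
  set κ := 1 - a * (p - 1) with hκdef
  have hκ : 0 < κ := by
    have h1 : a * (p - 1) < a * (1 / a) := mul_lt_mul_of_pos_left hpa ha
    rw [mul_one_div_cancel ha.ne'] at h1
    simp only [hκdef]; linarith
  -- δ and its properties
  set δ : ℕ → ℝ := fun n => r n / r (n + 1) - 1 - a * r n with hδdef
  have hδr : Tendsto (fun n => δ n / r n) atTop (nhds 0) := hrel.tendsto_div_nhds_zero
  have hδ0 : Tendsto δ atTop (nhds 0) := by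
    have h := hδr.mul hlim
    rw [mul_zero] at h
    apply h.congr
    intro n
    rw [div_mul_cancel₀ _ (hrne n)]
  set u : ℕ → ℝ := fun n => r n / r (n + 1) - 1 with hudef
  have huδ : ∀ n, u n = a * r n + δ n := by intro n; simp only [hudef, hδdef]; ring
  have hur : Tendsto (fun n => u n / r n) atTop (nhds a) := by
    have h : (fun n => u n / r n) = fun n => a + δ n / r n := by
      funext n
      rw [huδ n, add_div, mul_div_assoc, div_self (hrne n), mul_one]
    rw [h]
    simpa using (tendsto_const_nhds.add hδr)
  have hu0 : Tendsto u atTop (nhds 0) := by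
    have h := (hlim.const_mul a).add hδ0
    simp only [mul_zero, add_zero] at h
    exact h.congr fun n => (huδ n).symm
  have hratio : Tendsto (fun n => r n / r (n + 1)) atTop (nhds 1) := by
    have h := hu0.add_const 1
    rw [zero_add] at h
    apply h.congr
    intro n
    ring
  have hratio' : Tendsto (fun n => r (n + 1) / r n) atTop (nhds 1) := by
    have h := hratio.inv₀ one_ne_zero
    rw [inv_one] at h
    apply h.congr
    intro n; rw [inv_div]
  -- the function g
  set g : ℝ → ℝ := fun v => if v = 0 then p - 1 else ((1 + v) ^ (p - 1) - 1) / v with hgdef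
  have hg : Tendsto g (nhds 0) (nhds (p - 1)) := by
    have hder : HasDerivAt (fun x : ℝ => x ^ (p - 1)) (p - 1) 1 := by
      have h := Real.hasDerivAt_rpow_const (x := (1:ℝ)) (p := p - 1) (Or.inl one_ne_zero)
      simpa using h
    have hslope := hasDerivAt_iff_tendsto_slope.mp hder
    have hmap : Tendsto (fun v : ℝ => 1 + v) (nhdsWithin 0 {(0:ℝ)}ᶜ)
        (nhdsWithin 1 {(1:ℝ)}ᶜ) := by
      apply tendsto_nhdsWithin_of_tendsto_nhds_of_eventually_within
      · have hcont : Tendsto (fun v : ℝ => 1 + v) (nhds 0) (nhds 1) := by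
          have := (continuous_add_left (1:ℝ)).tendsto 0
          simpa using this
        exact hcont.mono_left nhdsWithin_le_nhds
      · filter_upwards [self_mem_nhdsWithin] with v hv
        simp only [Set.mem_compl_iff, Set.mem_singleton_iff] at hv ⊢
        intro hc
        apply hv
        linarith
    have h1 : Tendsto g (nhdsWithin 0 {(0:ℝ)}ᶜ) (nhds (p - 1)) := by
      have h2 := hslope.comp hmap
      apply h2.congr'
      filter_upwards [self_mem_nhdsWithin] with v hv
      simp only [Set.mem_compl_iff, Set.mem_singleton_iff] at hv
      simp only [Function.comp_apply, slope_def_field, hgdef, hv, if_neg hv]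
      rw [Real.one_rpow]
      congr 1
      ring
    have h2 : Tendsto g (pure 0) (nhds (p - 1)) := by
      rw [tendsto_pure_left]
      intro s hs
      have : g 0 = p - 1 := by simp [hgdef]
      rw [this]
      exact mem_of_mem_nhds hs
    have := h1.sup h2
    rwa [nhdsNE_sup_pure] at this
  have hgu : Tendsto (fun n => g (u n)) atTop (nhds (p - 1)) := hg.comp hu0
  -- q
  set q : ℕ → ℝ := fun n => (r n / r (n + 1)) ^ (p - 1) with hqdef
  have hq : ∀ n, q n = 1 + g (u n) * u n := by
    intro n
    have hru : r n / r (n + 1) = 1 + u n := by simp only [hudef]; ring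
    by_cases h : u n = 0
    · simp only [hqdef, hgdef, h, mul_zero, add_zero, hru]
      first
      | rw [Real.one_rpow]
      | (rw [h, add_zero, Real.one_rpow])
    · simp only [hqdef, hgdef, if_neg h, hru]
      rw [div_mul_cancel₀ _ h]
      ring
  have hq1 : Tendsto q atTop (nhds 1) := by
    have h := hgu.mul hu0
    rw [mul_zero] at h
    have h2 := h.const_add 1
    rw [add_zero] at h2
    exact h2.congr fun n => (hq n).symm
  have hq_sub : Tendsto (fun n => (q n - 1) / r n) atTop (nhds ((p - 1) * a)) := by
    have h : (fun n => (q n - 1) / r n) = fun n => g (u n) * (u n / r n) := by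
      funext n
      rw [hq n, add_sub_cancel_left, mul_div_assoc]
    rw [h]
    exact hgu.mul hur
  -- α
  set α : ℕ → ℝ := fun n => 1 - (1 - r (n + 1)) * q n with hαdef
  have hαr : Tendsto (fun n => α n / r n) atTop (nhds κ) := by
    have hid : ∀ n, α n / r n = -((q n - 1) / r n) + q n * (r (n + 1) / r n) := by
      intro n
      simp only [hαdef]
      field_simp
      ring
    have h := hq_sub.neg.add (hq1.mul hratio')
    rw [mul_one] at h
    have hval : -((p - 1) * a) + 1 = κ := by rw [hκdef]; ring
    rw [hval] at h
    exact h.congr fun n => (hid n).symm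
  have hαlow : ∀ᶠ n in atTop, κ / 2 * r n ≤ α n := by
    have h : ∀ᶠ n in atTop, κ / 2 < α n / r n :=
      hαr.eventually (lt_mem_nhds (by linarith))
    filter_upwards [h] with n hn
    have := (lt_div_iff₀ (hpos n)).mp hn
    linarith
  have hα0 : Tendsto α atTop (nhds 0) := by
    have h := hαr.mul hlim
    rw [mul_zero] at h
    apply h.congr
    intro n
    rw [div_mul_cancel₀ _ (hrne n)]
  have hαcond : ∀ᶠ n in atTop, 0 < α n ∧ α n ≤ 1 := by
    have h1 : ∀ᶠ n in atTop, α n < 1 := hα0.eventually (gt_mem_nhds one_pos)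
    filter_upwards [hαlow, h1] with n h2 h3
    constructor
    · exact lt_of_lt_of_le (mul_pos (by linarith) (hpos n)) h2
    · linarith
  -- d / α → 1/κ
  have hd : Tendsto (fun n => r (n + 1) / α n) atTop (nhds (1 / κ)) := by
    have h := hratio'.div hαr hκ.ne'
    apply h.congr'
    filter_upwards [hαlow] with n hn
    have hrn := hrne n
    have hαn : α n ≠ 0 := by
      have h0 : 0 < κ / 2 * r n := mul_pos (by linarith) (hpos n)
      exact (lt_of_lt_of_le h0 hn).ne'
    simp only [Pi.div_apply]
    field_simp
  -- divergence of ∑ r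
  have hinc : Tendsto (fun n => 1 / r (n + 1) - 1 / r n) atTop (nhds a) := by
    apply hur.congr
    intro n
    have hun : u n = r n / r (n + 1) - 1 := rfl
    rw [hun, sub_div, div_div, mul_comm, ← div_div, div_self (hrne n)]
  obtain ⟨N₀, hN₀⟩ := eventually_atTop.mp (hinc.eventually (gt_mem_nhds (by linarith : a < a + 1)))
  set M := 1 / r N₀ + (a + 1) with hMdef
  have hM : 0 < M := by
    have := hpos N₀
    have : 0 < 1 / r N₀ := by positivity
    simp only [hMdef]; linarith
  have hbound : ∀ k : ℕ, 1 / r (N₀ + k) ≤ 1 / r N₀ + (a + 1) * k := by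
    intro k
    induction k with
    | zero => simp
    | succ k ih =>
      have h := hN₀ (N₀ + k) (by omega)
      push_cast
      have heq : N₀ + (k + 1) = (N₀ + k) + 1 := by omega
      rw [heq]
      linarith
  have hlow : ∀ᶠ n in atTop, 1 / (M * (n + 1)) ≤ r n := by
    filter_upwards [eventually_ge_atTop N₀] with n hn
    obtain ⟨k, rfl⟩ := Nat.exists_eq_add_of_le hn
    have h1 := hbound k
    have hk : (k : ℝ) ≤ (N₀ : ℝ) + k := by
      have : (0:ℝ) ≤ (N₀ : ℝ) := Nat.cast_nonneg _
      linarith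
    have h0 : 0 < 1 / r N₀ := by
      have := hpos N₀; positivity
    have h2 : 1 / r (N₀ + k) ≤ M * ((N₀ + k : ℕ) + 1) := by
      push_cast
      simp only [hMdef]
      nlinarith
    have h3 : 0 < 1 / r (N₀ + k) := by
      have := hpos (N₀ + k); positivity
    have := one_div_le_one_div_of_le h3 h2
    rwa [one_div_one_div] at this
  have hharm := Real.tendsto_sum_range_one_div_nat_succ_atTop
  have hsum_low : Tendsto (fun n => ∑ i ∈ Finset.range n, 1 / (M * (i + 1))) atTop atTop := by
    have heq : (fun n => ∑ i ∈ Finset.range n, 1 / (M * ((i:ℝ) + 1)))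
        = fun n => (1 / M) * ∑ i ∈ Finset.range n, 1 / ((i:ℝ) + 1) := by
      funext n
      rw [Finset.mul_sum]
      apply Finset.sum_congr rfl
      intro i _
      rw [div_mul_div_comm, one_mul]
    rw [heq]
    exact hharm.const_mul_atTop (by positivity)
  have hsum_r : Tendsto (fun n => ∑ i ∈ Finset.range n, r i) atTop atTop :=
    sumAux _ _ hlow hsum_low
  have hsum_rc : Tendsto (fun n => ∑ i ∈ Finset.range n, κ / 2 * r i) atTop atTop := by
    have heq : (fun n => ∑ i ∈ Finset.range n, κ / 2 * r i)
        = fun n => (κ / 2) * ∑ i ∈ Finset.range n, r i := by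
      funext n; rw [Finset.mul_sum]
    rw [heq]
    exact hsum_r.const_mul_atTop (by positivity)
  have hsum_α : Tendsto (fun n => ∑ i ∈ Finset.range n, α i) atTop atTop :=
    sumAux _ _ hαlow hsum_rc
  -- the recurrence
  set f : ℕ → ℝ := fun T => ∑ n ∈ Finset.Icc 1 T,
      (r n) ^ p * ∏ s ∈ Finset.Icc (n + 1) T, (1 - r s) with hfdef
  have hrec : ∀ T, f (T + 1) = (1 - r (T + 1)) * f T + (r (T + 1)) ^ p := by
    intro T
    simp only [hfdef]
    rw [Finset.sum_Icc_succ_top (by omega : 1 ≤ T + 1)]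
    have hempty : Finset.Icc (T + 1 + 1) (T + 1) = ∅ := Finset.Icc_eq_empty (by omega)
    rw [hempty, Finset.prod_empty, mul_one]
    congr 1
    rw [Finset.mul_sum]
    apply Finset.sum_congr rfl
    intro n hn
    have hn' : n + 1 ≤ T + 1 := by
      simp only [Finset.mem_Icc] at hn; omega
    rw [Finset.prod_Icc_succ_top hn']
    ring
  set x : ℕ → ℝ := fun T => f T / (r T) ^ (p - 1) with hxdef
  have hxrec : ∀ T, x (T + 1) = (1 - α T) * x T + r (T + 1) := by
    intro T
    have h1 : (0:ℝ) < r T := hpos T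
    have h2 : (0:ℝ) < r (T + 1) := hpos (T + 1)
    have hp1 : (0:ℝ) < (r T) ^ (p - 1) := Real.rpow_pos_of_pos h1 _
    have hp2 : (0:ℝ) < (r (T + 1)) ^ (p - 1) := Real.rpow_pos_of_pos h2 _
    have hpow : (r (T + 1)) ^ p / (r (T + 1)) ^ (p - 1) = r (T + 1) := by
      rw [← Real.rpow_sub h2]
      simp
    have hqd : q T = (r T) ^ (p - 1) / (r (T + 1)) ^ (p - 1) := by
      simp only [hqdef]
      rw [Real.div_rpow h1.le h2.le]
    simp only [hxdef]
    rw [hrec T, add_div, hpow]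
    congr 1
    have hαq : 1 - α T = (1 - r (T + 1)) * q T := by simp only [hαdef]; ring
    rw [hαq, hqd]
    field_simp
  have := tendstoAux x α (fun T => r (T + 1)) (1 / κ) hxrec hαcond hd hsum_α
  exact this
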